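/- Let p be a prime and R a commutative ring of characteristic p. Then for every n ≥ 1 one has α(I^n) ⊆ V^n(𝕎 R), i.e. for every x ∈ I^n the Witt vector α(x) lies in the image of the n-th iterate of the Verschiebung V : 𝕎 R → 𝕎 R. Consequently α induces a ring homomorphism ℤR/I^n → W_n R. -/

import Mathlib

noncomputable section

/-- The canonical projection `ℤR → R` from the monoid algebra of the
multiplicative monoid of `R`, sending `[r]` to `r`. -/
def piHom (R : Type*) [CommRing R] : MonoidAlgebra ℤ R →+* R :=
  (MonoidAlgebra.lift ℤ R R (MonoidHom.id R)).toRingHom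

/-- `I = ker (ℤR → R)`. -/
def Iideal (R : Type*) [CommRing R] : Ideal (MonoidAlgebra ℤ R) :=
  RingHom.ker (piHom R)

/-- The ring homomorphism `α : ℤR → 𝕎 R` with `α [r] = ⟨r⟩` (Teichmüller). -/
def alphaHom (p : ℕ) [Fact p.Prime] (R : Type*) [CommRing R] :
    MonoidAlgebra ℤ R →+* WittVector p R :=
  (MonoidAlgebra.lift ℤ (WittVector p R) R (WittVector.teichmuller p)).toRingHom

open WittVector

lemma ghost0_comp_alpha (p : ℕ) [Fact p.Prime] (R : Type*) [CommRing R] :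
    (WittVector.ghostComponent (p := p) (R := R) 0).comp (alphaHom p R) = piHom R := by
  apply MonoidAlgebra.ringHom_ext
  · intro b
    have h1 : (MonoidAlgebra.single (1 : R) b : MonoidAlgebra ℤ R)
        = (b : MonoidAlgebra ℤ R) := by
      simp [MonoidAlgebra.intCast_def]
    rw [h1, map_intCast, map_intCast]
  · intro r
    simp only [RingHom.comp_apply, alphaHom, piHom, RingHom.coe_coe,
      AlgHom.toRingHom_eq_coe, MonoidAlgebra.lift_single, one_smul]
    simp [ghostComponent_apply, wittPolynomial_zero, MonoidHom.id_apply]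

lemma alpha_single (p : ℕ) [Fact p.Prime] (R : Type*) [CommRing R] (r : R) :
    alphaHom p R (MonoidAlgebra.single r 1) = WittVector.teichmuller p r := by
  simp [alphaHom]

lemma coeff_zero_alpha (p : ℕ) [Fact p.Prime] (R : Type*) [CommRing R]
    (x : MonoidAlgebra ℤ R) (hx : x ∈ Iideal R) :
    (alphaHom p R x).coeff 0 = 0 := by
  have := RingHom.congr_fun (ghost0_comp_alpha p R) x
  have h0 : (WittVector.ghostComponent (p := p) (R := R) 0) (alphaHom p R x)
      = (alphaHom p R x).coeff 0 := by
    simp [ghostComponent_apply, wittPolynomial_zero]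
  rw [RingHom.comp_apply, h0] at this
  rw [this]
  exact hx

lemma mem_I_exists_versch (p : ℕ) [Fact p.Prime] (R : Type*) [CommRing R]
    (x : MonoidAlgebra ℤ R) (hx : x ∈ Iideal R) :
    ∃ y : WittVector p R,
      alphaHom p R x = (⇑(WittVector.verschiebung (p := p) (R := R)))^[1] y := by
  refine ⟨(alphaHom p R x).shift 1, ?_⟩
  apply WittVector.eq_iterate_verschiebung
  intro i hi
  interval_cases i
  exact coeff_zero_alpha p R x hx

lemma coeff_iterate_versch_lt (p : ℕ) [Fact p.Prime] (R : Type*) [CommRing R]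
    (y : WittVector p R) :
    ∀ n i, i < n →
      ((⇑(WittVector.verschiebung (p := p) (R := R)))^[n] y).coeff i = 0 := by
  intro n
  induction n with
  | zero => intro i hi; omega
  | succ m ih =>
    intro i hi
    rw [Function.iterate_succ_apply']
    cases i with
    | zero => exact WittVector.verschiebung_coeff_zero _
    | succ j =>
      rw [WittVector.verschiebung_coeff_succ]
      exact ih j (by omega)

/-- Let `p` be a prime and `R` a commutative ring of characteristic `p`.
For every `n ≥ 1`, `α (I^n) ⊆ V^n (𝕎 R)`, and consequently `α` induces a ring
homomorphism `ℤR/I^n → W_n R`. -/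
theorem statement10 (p : ℕ) [Fact p.Prime] (R : Type*) [CommRing R] [CharP R p]
    (n : ℕ) (hn : 1 ≤ n) :
    (∀ x ∈ (Iideal R) ^ n, ∃ y : WittVector p R,
        alphaHom p R x = (⇑(WittVector.verschiebung (p := p) (R := R)))^[n] y) ∧
    (∃ g : (MonoidAlgebra ℤ R ⧸ (Iideal R) ^ n) →+* TruncatedWittVector p n R,
        ∀ x : MonoidAlgebra ℤ R,
          g (Ideal.Quotient.mk ((Iideal R) ^ n) x) =
            WittVector.truncate n (alphaHom p R x)) := by
  have main : ∀ x ∈ (Iideal R) ^ n, ∃ y : WittVector p R,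
      alphaHom p R x = (⇑(WittVector.verschiebung (p := p) (R := R)))^[n] y := by
    induction n, hn using Nat.le_induction with
    | base =>
      intro x hx
      rw [pow_one] at hx
      exact mem_I_exists_versch p R x hx
    | succ m hm ih =>
      intro x hx
      rw [pow_succ] at hx
      refine Submodule.mul_induction_on hx ?_ ?_
      · intro a ha b hb
        obtain ⟨ya, hya⟩ := ih a ha
        obtain ⟨yb, hyb⟩ := mem_I_exists_versch p R b hb
        refine ⟨(frobenius^[1] ya) * (frobenius^[m] yb), ?_⟩
        rw [map_mul, hya, hyb, WittVector.iterate_verschiebung_mul]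
      · intro z w ⟨yz, hyz⟩ ⟨yw, hyw⟩
        refine ⟨yz + yw, ?_⟩
        rw [map_add, hyz, hyw,
          iterate_map_add]
  refine ⟨main, ?_⟩
  have hker : ∀ x ∈ (Iideal R) ^ n,
      (WittVector.truncate (p := p) (R := R) n) (alphaHom p R x) = 0 := by
    intro x hx
    obtain ⟨y, hy⟩ := main x hx
    rw [hy, ← RingHom.mem_ker, WittVector.mem_ker_truncate]
    intro i hi
    exact coeff_iterate_versch_lt p R y n i hi
  refine ⟨Ideal.Quotient.lift _
    ((WittVector.truncate (p := p) (R := R) n).comp (alphaHom p R)) ?_, ?_⟩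
  · intro x hx
    simpa using hker x hx
  · intro x
    simp
end
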